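/- Grioli's theorem: Let F ∈ GL(3,ℝ) with polar decomposition F = R·D (R orthogonal, D symmetric positive definite with eigenvalues 1+Δ₁, 1+Δ₂, 1+Δ₃). Then for any point p ∈ ℝ³, translation t' ∈ ℝ³ and rotation R' ∈ SO(3), ∫_{B_ρ(0)} |p + F·h − (R'·h + t')|² dh ≥ (4πρ⁵/15)·(Δ₁² + Δ₂² + Δ₃²), with equality if and only if t' = p and R' = R. -/

import Mathlib

open Matrix MeasureTheory Metric Set

noncomputable def mv (Z : Matrix (Fin 3) (Fin 3) ℝ) (h : EuclideanSpace ℝ (Fin 3)) :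
    EuclideanSpace ℝ (Fin 3) :=
  (EuclideanSpace.equiv (Fin 3) ℝ).symm (Z.mulVec (EuclideanSpace.equiv (Fin 3) ℝ h))


lemma col_sq_sum {W : Matrix (Fin 3) (Fin 3) ℝ} (hW : Wᵀ * W = 1) (j : Fin 3) :
    ∑ k, (W k j)^2 = 1 := by
  have := congrFun (congrFun hW j) j
  simpa [Matrix.mul_apply, Matrix.one_apply, sq] using this

lemma entry_le_one {W : Matrix (Fin 3) (Fin 3) ℝ} (hW : Wᵀ * W = 1) (i j : Fin 3) :
    W i j ≤ 1 := by
  have h1 := col_sq_sum hW j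
  have h2 : (W i j)^2 ≤ 1 := by
    rw [← h1]
    exact Finset.single_le_sum (f := fun k => (W k j)^2) (fun k _ => sq_nonneg _)
      (Finset.mem_univ i)
  nlinarith

lemma diag_one_imp_id {W : Matrix (Fin 3) (Fin 3) ℝ} (hW : Wᵀ * W = 1)
    (hd : ∀ i, W i i = 1) : W = 1 := by
  ext i j
  rcases eq_or_ne i j with rfl | hij
  · simp [hd i, Matrix.one_apply]
  · have h1 := col_sq_sum hW j
    rw [← Finset.add_sum_erase _ _ (Finset.mem_univ j), hd j] at h1
    have h2 : ∑ k ∈ Finset.univ.erase j, (W k j)^2 = 0 := by nlinarith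
    have h3 : (W i j)^2 = 0 :=
      (Finset.sum_eq_zero_iff_of_nonneg (fun k _ => sq_nonneg (W k j))).mp h2 i
        (Finset.mem_erase.mpr ⟨hij, Finset.mem_univ i⟩)
    have := pow_eq_zero_iff (n := 2) (by norm_num) |>.mp h3
    simp [this, Matrix.one_apply, hij]

lemma star_eq_transpose (A : Matrix (Fin 3) (Fin 3) ℝ) : star A = Aᵀ := by
  rw [Matrix.star_eq_conjTranspose, Matrix.conjTranspose_eq_transpose_of_trivial]

section spectral
variable {D : Matrix (Fin 3) (Fin 3) ℝ} (hD : D.PosDef)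
  (Q : Matrix (Fin 3) (Fin 3) ℝ) (hQ : Qᵀ * Q = 1)

lemma trace_mul_diag (W : Matrix (Fin 3) (Fin 3) ℝ) (d : Fin 3 → ℝ) :
    (W * diagonal d).trace = ∑ i, W i i * d i := by
  simp [Matrix.trace, Matrix.diag, Matrix.mul_diagonal]

lemma spectral_facts :
    ((Q * D).trace = ∑ i, (star (hD.1.eigenvectorUnitary : Matrix (Fin 3) (Fin 3) ℝ) * Q *
        (hD.1.eigenvectorUnitary : Matrix (Fin 3) (Fin 3) ℝ)) i i * hD.1.eigenvalues i)
    ∧ D.trace = ∑ i, hD.1.eigenvalues i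
    ∧ (D * D).trace = ∑ i, (hD.1.eigenvalues i)^2 := by
  set U : Matrix (Fin 3) (Fin 3) ℝ := (hD.1.eigenvectorUnitary : Matrix (Fin 3) (Fin 3) ℝ)
    with hU
  have hU1 : star U * U = 1 := by rw [hU]; exact Unitary.coe_star_mul_self _
  have hU2 : U * star U = 1 := by rw [hU]; exact Unitary.coe_mul_star_self _
  set ev := hD.1.eigenvalues with hev
  have hspec : D = U * diagonal ev * star U := by
    have := hD.1.spectral_theorem
    simpa [RCLike.ofReal_real_eq_id] using this
  refine ⟨?_, ?_, ?_⟩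
  · calc (Q * D).trace = (Q * (U * diagonal ev * star U)).trace := by rw [← hspec]
       _ = ((Q * (U * diagonal ev)) * star U).trace := by
          rw [Matrix.mul_assoc Q (U * diagonal ev) (star U)]
       _ = (star U * (Q * (U * diagonal ev))).trace := Matrix.trace_mul_comm _ _
       _ = ((star U * Q * U) * diagonal ev).trace := by
          congr 1; simp only [Matrix.mul_assoc]
       _ = _ := trace_mul_diag _ _
  · calc D.trace = ((U * diagonal ev) * star U).trace := by
          rw [← hspec]
       _ = (star U * (U * diagonal ev)).trace := Matrix.trace_mul_comm _ _
       _ = (diagonal ev).trace := by rw [← Matrix.mul_assoc, hU1, Matrix.one_mul]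
       _ = _ := by simp [Matrix.trace_diagonal]
  · have hDD : D * D = U * (diagonal ev * diagonal ev) * star U := by
      conv_lhs => rw [hspec]
      calc U * diagonal ev * star U * (U * diagonal ev * star U)
          = U * diagonal ev * (star U * U) * diagonal ev * star U := by
            simp only [Matrix.mul_assoc]
        _ = U * (diagonal ev * diagonal ev) * star U := by
            rw [hU1, Matrix.mul_one]; simp only [Matrix.mul_assoc]
    calc (D*D).trace = (U * (diagonal ev * diagonal ev) * star U).trace := by rw [hDD]
       _ = (star U * (U * (diagonal ev * diagonal ev))).trace := Matrix.trace_mul_comm _ _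
       _ = ((diagonal ev * diagonal ev)).trace := by
          rw [← Matrix.mul_assoc, hU1, Matrix.one_mul]
       _ = _ := by simp [Matrix.diagonal_mul_diagonal, Matrix.trace_diagonal, sq]

include hD hQ in
lemma trace_QD : (Q * D).trace ≤ D.trace ∧ ((Q * D).trace = D.trace → Q = 1) := by
  obtain ⟨h1, h2, _⟩ := spectral_facts hD Q
  set U : Matrix (Fin 3) (Fin 3) ℝ := (hD.1.eigenvectorUnitary : Matrix (Fin 3) (Fin 3) ℝ)
    with hU
  have hU1 : star U * U = 1 := by rw [hU]; exact Unitary.coe_star_mul_self _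
  have hU2 : U * star U = 1 := by rw [hU]; exact Unitary.coe_mul_star_self _
  set W : Matrix (Fin 3) (Fin 3) ℝ := star U * Q * U with hW
  have hWo : Wᵀ * W = 1 := by
    have hsW : star W = star U * Qᵀ * U := by
      rw [hW]
      simp only [StarMul.star_mul, star_star]
      rw [star_eq_transpose Q, Matrix.mul_assoc]
    rw [← star_eq_transpose W, hsW]
    calc star U * Qᵀ * U * (star U * Q * U)
        = star U * Qᵀ * (U * star U) * (Q * U) := by simp only [Matrix.mul_assoc]
      _ = star U * (Qᵀ * Q) * U := by rw [hU2, Matrix.mul_one]; simp only [Matrix.mul_assoc]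
      _ = 1 := by rw [hQ, Matrix.mul_one, hU1]
  have hlam : ∀ i, 0 < hD.1.eigenvalues i := hD.eigenvalues_pos
  have hdiff : D.trace - (Q * D).trace = ∑ i, hD.1.eigenvalues i * (1 - W i i) := by
    rw [h1, h2, ← Finset.sum_sub_distrib]
    congr 1; ext i; ring
  have hterm : ∀ i ∈ Finset.univ, (0:ℝ) ≤ hD.1.eigenvalues i * (1 - W i i) := by
    intro i _
    have := entry_le_one hWo i i
    nlinarith [hlam i]
  constructor
  · have : 0 ≤ D.trace - (Q * D).trace := by
      rw [hdiff]; exact Finset.sum_nonneg hterm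
    linarith
  · intro heq
    have hz : ∑ i, hD.1.eigenvalues i * (1 - W i i) = 0 := by rw [← hdiff, heq]; ring
    have hdall : ∀ i, W i i = 1 := by
      intro i
      have := (Finset.sum_eq_zero_iff_of_nonneg hterm).mp hz i (Finset.mem_univ i)
      have hne := (hlam i).ne'
      rcases mul_eq_zero.mp this with h | h
      · exact absurd h hne
      · linarith
    have hW1 : W = 1 := diag_one_imp_id hWo hdall
    have hQid : U * W * star U = Q := by
      rw [hW]
      calc U * (star U * Q * U) * star U = (U * star U) * Q * (U * star U) := by
            simp only [Matrix.mul_assoc]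
        _ = Q := by rw [hU2, Matrix.one_mul, Matrix.mul_one]
    rw [← hQid, hW1, Matrix.mul_one, hU2]

end spectral

abbrev E3 := EuclideanSpace ℝ (Fin 3)

noncomputable def negCoord (j : Fin 3) : E3 ≃ₗᵢ[ℝ] E3 :=
  LinearIsometryEquiv.piLpCongrRight 2
    (fun i => if i = j then LinearIsometryEquiv.neg ℝ else LinearIsometryEquiv.refl ℝ ℝ)

lemma negCoord_apply (j : Fin 3) (x : E3) (i : Fin 3) :
    negCoord j x i = if i = j then -x i else x i := by
  simp [negCoord]
  split <;> simp

noncomputable def swapCoord (j : Fin 3) : E3 ≃ₗᵢ[ℝ] E3 :=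
  LinearIsometryEquiv.piLpCongrLeft 2 ℝ ℝ (Equiv.swap j 0)

lemma swapCoord_apply (j : Fin 3) (x : E3) (i : Fin 3) :
    swapCoord j x i = x (Equiv.swap j 0 i) := by
  simp [swapCoord, Equiv.piCongrLeft', Equiv.symm_apply_eq]

lemma preimage_ball_isom (e : E3 ≃ₗᵢ[ℝ] E3) (ρ : ℝ) :
    e ⁻¹' (ball (0:E3) ρ) = ball 0 ρ := by
  ext x
  simp [mem_ball_zero_iff, e.norm_map]

lemma setIntegral_isom (e : E3 ≃ₗᵢ[ℝ] E3) (ρ : ℝ) (g : E3 → ℝ) :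
    ∫ x in ball (0:E3) ρ, g (e x) = ∫ x in ball (0:E3) ρ, g x := by
  have := (e.measurePreserving).setIntegral_preimage_emb
    (e.toHomeomorph.measurableEmbedding) g (ball (0:E3) ρ)
  rwa [preimage_ball_isom] at this

lemma cont_coord (j : Fin 3) : Continuous (fun x : E3 => x j) :=
  (EuclideanSpace.proj (𝕜 := ℝ) j).continuous

lemma cont_integrableOn {f : E3 → ℝ} (hf : Continuous f) (ρ : ℝ) :
    IntegrableOn f (ball (0:E3) ρ) volume :=
  ((hf.continuousOn).integrableOn_compact (isCompact_closedBall 0 ρ)).mono_set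
    ball_subset_closedBall

lemma normsq_eq (x : E3) : ‖x‖^2 = ∑ i, (x i)^2 := by
  rw [EuclideanSpace.norm_eq, Real.sq_sqrt (by positivity)]
  simp [sq_abs]

lemma integral_coord_zero (ρ : ℝ) (j : Fin 3) :
    ∫ h in ball (0:E3) ρ, h j = 0 := by
  have h1 := setIntegral_isom (negCoord j) ρ (fun h => h j)
  simp only [negCoord_apply, if_pos rfl, if_true, eq_self_iff_true] at h1
  rw [integral_neg] at h1
  linarith

lemma integral_offdiag_zero (ρ : ℝ) {j k : Fin 3} (hjk : j ≠ k) :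
    ∫ h in ball (0:E3) ρ, h j * h k = 0 := by
  have h1 := setIntegral_isom (negCoord j) ρ (fun h => h j * h k)
  simp only [negCoord_apply, if_pos rfl, if_true, eq_self_iff_true,
    if_neg (Ne.symm hjk), neg_mul] at h1
  rw [integral_neg] at h1
  linarith

lemma integral_normsq (ρ : ℝ) (hρ : 0 < ρ) :
    ∫ h in ball (0:E3) ρ, ‖h‖^2 = 4 * Real.pi * ρ^5 / 5 := by
  have hind : ∀ h : E3, (ball (0:E3) ρ).indicator (fun h => ‖h‖^2) h
      = (fun r : ℝ => if r < ρ then r^2 else 0) ‖h‖ := by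
    intro h
    by_cases hh : h ∈ ball (0:E3) ρ
    · rw [indicator_of_mem hh]
      simp [if_pos (mem_ball_zero_iff.mp hh)]
    · rw [indicator_of_notMem hh]
      simp only [mem_ball_zero_iff, not_lt] at hh
      simp [if_neg (not_lt.mpr hh)]
  rw [← integral_indicator measurableSet_ball]
  rw [show ((ball (0:E3) ρ).indicator fun h => ‖h‖^2)
      = fun h : E3 => (fun r : ℝ => if r < ρ then r^2 else 0) ‖h‖ from funext hind]
  rw [integral_fun_norm_addHaar volume (fun r : ℝ => if r < ρ then r^2 else 0)]
  have hdim : Module.finrank ℝ E3 = 3 := finrank_euclideanSpace_fin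
  rw [hdim]
  have hinner : ∫ y in Ioi (0:ℝ), y ^ (3-1) • (if y < ρ then y^2 else 0) = ρ^5/5 := by
    have : ∀ y : ℝ, y ^ (3-1) • (if y < ρ then y^2 else 0)
        = (Iio ρ).indicator (fun y => y^4) y := by
      intro y
      by_cases hy : y < ρ <;> simp [hy, indicator, smul_eq_mul] <;> ring
    rw [show (fun y : ℝ => y ^ (3-1) • (if y < ρ then y^2 else 0))
        = (Iio ρ).indicator (fun y => y^4) from funext this]
    rw [setIntegral_indicator measurableSet_Iio]
    have : Ioi (0:ℝ) ∩ Iio ρ = Ioo 0 ρ := Ioi_inter_Iio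
    rw [this, ← integral_Ioc_eq_integral_Ioo, ← intervalIntegral.integral_of_le hρ.le]
    simp [integral_pow]
    ring
  rw [hinner]
  have hvol : (volume (ball (0:E3) 1)).toReal = 4 * Real.pi / 3 := by
    rw [EuclideanSpace.volume_ball]
    have hcard : (Fintype.card (Fin 3)) = 3 := by simp
    rw [hcard]
    have hγ : Real.Gamma ((3:ℝ)/2 + 1) = 3/4 * Real.sqrt Real.pi := by
      rw [Real.Gamma_add_one (by norm_num)]
      have : (3:ℝ)/2 = 1/2 + 1 := by norm_num
      rw [this, Real.Gamma_add_one (by norm_num), Real.Gamma_one_half_eq]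
      ring
    have hπ : Real.sqrt Real.pi ≠ 0 := by
      positivity
    have hs : Real.sqrt Real.pi ^ 3 / Real.Gamma ((3:ℝ)/2 + 1) = 4 * Real.pi / 3 := by
      rw [hγ]
      have h1 : Real.sqrt Real.pi ^ 3 = Real.pi * Real.sqrt Real.pi := by
        rw [pow_succ, pow_two, Real.mul_self_sqrt Real.pi_nonneg]
      rw [h1]
      field_simp
    push_cast
    rw [hs]
    rw [ENNReal.toReal_mul, ENNReal.toReal_pow, ENNReal.toReal_ofReal (by norm_num),
      ENNReal.toReal_ofReal (by positivity)]
    norm_num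
  rw [measureReal_def, hvol]
  simp only [smul_eq_mul, nsmul_eq_mul]
  push_cast
  ring

lemma integral_coord_sq (ρ : ℝ) (hρ : 0 < ρ) (j : Fin 3) :
    ∫ h in ball (0:E3) ρ, h j * h j = 4 * Real.pi * ρ^5 / 15 := by
  have hswap : ∀ i : Fin 3, ∫ h in ball (0:E3) ρ, h i * h i
      = ∫ h in ball (0:E3) ρ, h 0 * h 0 := by
    intro i
    have h1 := setIntegral_isom (swapCoord i) ρ (fun h => h 0 * h 0)
    have h2 : (fun x : E3 => swapCoord i x 0 * swapCoord i x 0)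
        = fun x : E3 => x i * x i := by
      funext x
      rw [swapCoord_apply, Equiv.swap_apply_right]
    simp only [h2] at h1
    exact h1
  have hsum : ∑ i : Fin 3, ∫ h in ball (0:E3) ρ, h i * h i
      = 4 * Real.pi * ρ^5 / 5 := by
    rw [← integral_finset_sum _ (fun i _ =>
      cont_integrableOn (f := fun h : E3 => h i * h i) ((cont_coord i).mul (cont_coord i)) ρ)]
    rw [← integral_normsq ρ hρ]
    congr 1
    funext h
    rw [normsq_eq]
    congr 1; funext i; ring
  have h3 : (3:ℝ) * ∫ h in ball (0:E3) ρ, h 0 * h 0 = 4 * Real.pi * ρ^5 / 5 := by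
    rw [← hsum, Fin.sum_univ_three, hswap 1, hswap 2]
    ring
  rw [hswap j]
  linarith

lemma integral_mul_coord (ρ : ℝ) (hρ : 0 < ρ) (j k : Fin 3) :
    ∫ h in ball (0:E3) ρ, h j * h k
      = if j = k then 4 * Real.pi * ρ^5 / 15 else 0 := by
  rcases eq_or_ne j k with rfl | hjk
  · rw [if_pos rfl]; exact integral_coord_sq ρ hρ j
  · rw [if_neg hjk]; exact integral_offdiag_zero ρ hjk


lemma mv_apply (Z : Matrix (Fin 3) (Fin 3) ℝ) (h : E3) (i : Fin 3) :
    mv Z h i = ∑ j, Z i j * h j := rfl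

noncomputable def mvL (Z : Matrix (Fin 3) (Fin 3) ℝ) : E3 →ₗ[ℝ] E3 where
  toFun := mv Z
  map_add' x y := by
    simp [mv, Matrix.mulVec_add]
  map_smul' r x := by
    simp [mv, Matrix.mulVec_smul]

lemma mv_cont (Z : Matrix (Fin 3) (Fin 3) ℝ) : Continuous (mv Z) :=
  (mvL Z).continuous_of_finiteDimensional

lemma mv_sub (A B : Matrix (Fin 3) (Fin 3) ℝ) (h : E3) :
    mv (A - B) h = mv A h - mv B h := by
  simp [mv, Matrix.sub_mulVec]

lemma key (M : Matrix (Fin 3) (Fin 3) ℝ) (c : E3) (ρ : ℝ) (hρ : 0 < ρ) :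
    ∫ h in ball (0:E3) ρ, ‖c + mv M h‖^2
      = (volume (ball (0:E3) ρ)).toReal * ‖c‖^2
        + (4*Real.pi*ρ^5/15) * ∑ i, ∑ j, (M i j)^2 := by
  have hpt : ∀ h : E3, ‖c + mv M h‖^2
      = ‖c‖^2 + (2 * (inner ℝ c (mv M h) : ℝ) + ‖mv M h‖^2) := by
    intro h
    rw [norm_add_sq_real]; ring
  rw [show (fun h : E3 => ‖c + mv M h‖^2)
      = fun h : E3 => ‖c‖^2 + (2 * (inner ℝ c (mv M h) : ℝ) + ‖mv M h‖^2) from funext hpt]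
  have I1 : IntegrableOn (fun _ : E3 => ‖c‖^2) (ball (0:E3) ρ) volume :=
    integrableOn_const measure_ball_lt_top.ne
  have I2 : IntegrableOn (fun h : E3 => 2 * (inner ℝ c (mv M h) : ℝ)) (ball (0:E3) ρ) volume := by
    apply cont_integrableOn
    exact continuous_const.mul (Continuous.inner continuous_const (mv_cont M))
  have I3 : IntegrableOn (fun h : E3 => ‖mv M h‖^2) (ball (0:E3) ρ) volume :=
    cont_integrableOn (((mv_cont M).norm).pow 2) ρ
  have I23 : IntegrableOn (fun h : E3 => 2 * (inner ℝ c (mv M h) : ℝ) + ‖mv M h‖^2)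
      (ball (0:E3) ρ) volume := I2.add I3
  rw [integral_add I1 I23, integral_add I2 I3]
  have e1 : ∫ _ in ball (0:E3) ρ, ‖c‖^2 = (volume (ball (0:E3) ρ)).toReal * ‖c‖^2 := by
    rw [setIntegral_const, smul_eq_mul, measureReal_def]
  have e2 : ∫ h in ball (0:E3) ρ, 2 * (inner ℝ c (mv M h) : ℝ) = 0 := by
    have hpt2 : ∀ h : E3, (2:ℝ) * inner ℝ c (mv M h)
        = ∑ i, ∑ j, (2 * c i * M i j) * h j := by
      intro h
      have : (inner ℝ c (mv M h) : ℝ) = ∑ i, c i * (∑ j, M i j * h j) := by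
        simp [PiLp.inner_apply, RCLike.inner_apply, conj_trivial, mv_apply]
        exact Finset.sum_congr rfl fun _ _ => mul_comm _ _
      rw [this, Finset.mul_sum]
      refine Finset.sum_congr rfl fun i _ => ?_
      rw [Finset.mul_sum, Finset.mul_sum]
      refine Finset.sum_congr rfl fun j _ => by ring
    rw [show (fun h : E3 => 2 * (inner ℝ c (mv M h) : ℝ))
        = fun h : E3 => ∑ i, ∑ j, (2 * c i * M i j) * h j from funext hpt2]
    rw [integral_finset_sum _ (fun i _ => by
      apply integrable_finset_sum _ (fun j _ => ?_)
      exact cont_integrableOn (continuous_const.mul (cont_coord j)) ρ)]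
    refine Finset.sum_eq_zero fun i _ => ?_
    rw [integral_finset_sum _ (fun j _ =>
      cont_integrableOn (f := fun h : E3 => 2 * c i * M i j * h j) (continuous_const.mul (cont_coord j)) ρ)]
    refine Finset.sum_eq_zero fun j _ => ?_
    rw [MeasureTheory.integral_const_mul, integral_coord_zero ρ j, mul_zero]
  have e3 : ∫ h in ball (0:E3) ρ, ‖mv M h‖^2
      = (4*Real.pi*ρ^5/15) * ∑ i, ∑ j, (M i j)^2 := by
    have hpt3 : ∀ h : E3, ‖mv M h‖^2
        = ∑ i, ∑ j, ∑ k, (M i j * M i k) * (h j * h k) := by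
      intro h
      rw [normsq_eq]
      refine Finset.sum_congr rfl fun i _ => ?_
      rw [mv_apply, sq, Finset.sum_mul_sum]
      refine Finset.sum_congr rfl fun j _ => Finset.sum_congr rfl fun k _ => by ring
    rw [show (fun h : E3 => ‖mv M h‖^2)
        = fun h : E3 => ∑ i, ∑ j, ∑ k, (M i j * M i k) * (h j * h k) from funext hpt3]
    rw [integral_finset_sum _ (fun i _ => by
      apply integrable_finset_sum _ (fun j _ => ?_)
      apply integrable_finset_sum _ (fun k _ => ?_)
      exact cont_integrableOn (continuous_const.mul ((cont_coord j).mul (cont_coord k))) ρ)]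
    have : ∀ i : Fin 3, ∫ h in ball (0:E3) ρ, ∑ j, ∑ k, (M i j * M i k) * (h j * h k)
        = ∑ j, (M i j)^2 * (4*Real.pi*ρ^5/15) := by
      intro i
      rw [integral_finset_sum _ (fun j _ => by
        apply integrable_finset_sum _ (fun k _ => ?_)
        exact cont_integrableOn (continuous_const.mul ((cont_coord j).mul (cont_coord k))) ρ)]
      refine Finset.sum_congr rfl fun j _ => ?_
      rw [integral_finset_sum _ (fun k _ =>
        cont_integrableOn (f := fun h : E3 => M i j * M i k * (h j * h k)) (continuous_const.mul ((cont_coord j).mul (cont_coord k))) ρ)]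
      have : ∀ k : Fin 3, ∫ h in ball (0:E3) ρ, (M i j * M i k) * (h j * h k)
          = if j = k then (M i j * M i k) * (4*Real.pi*ρ^5/15) else 0 := by
        intro k
        rw [MeasureTheory.integral_const_mul, integral_mul_coord ρ hρ j k]
        split <;> simp
      simp only [this, Finset.sum_ite_eq, Finset.mem_univ, if_true]
      ring
    simp only [this]
    rw [Finset.mul_sum]
    refine Finset.sum_congr rfl fun i _ => ?_
    rw [Finset.mul_sum]
    refine Finset.sum_congr rfl fun j _ => by ring
  rw [e1, e2, e3]
  ring

lemma sum_sq_eq_trace (A : Matrix (Fin 3) (Fin 3) ℝ) :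
    ∑ i, ∑ j, (A i j)^2 = (Aᵀ * A).trace := by
  simp only [Matrix.trace, Matrix.diag, Matrix.mul_apply, Matrix.transpose_apply, sq]
  exact Finset.sum_comm


theorem grioli (F R D : Matrix (Fin 3) (Fin 3) ℝ) (hdet : 0 < F.det)
    (hR : Rᵀ * R = 1) (hRdet : R.det = 1) (hD : D.PosDef) (hFRD : F = R * D)
    (Δ : Fin 3 → ℝ) (hΔ : ∀ i, hD.1.eigenvalues i = 1 + Δ i)
    (p t' : EuclideanSpace ℝ (Fin 3)) (R' : Matrix (Fin 3) (Fin 3) ℝ)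
    (hR' : R'ᵀ * R' = 1) (hR'det : R'.det = 1) (ρ : ℝ) (hρ : 0 < ρ) :
    (∫ h in Metric.ball (0 : EuclideanSpace ℝ (Fin 3)) ρ,
        ‖p + mv F h - (mv R' h + t')‖ ^ 2)
      ≥ (4 * Real.pi * ρ ^ 5 / 15) * (Δ 0 ^ 2 + Δ 1 ^ 2 + Δ 2 ^ 2) ∧
    ((∫ h in Metric.ball (0 : EuclideanSpace ℝ (Fin 3)) ρ,
        ‖p + mv F h - (mv R' h + t')‖ ^ 2)
      = (4 * Real.pi * ρ ^ 5 / 15) * (Δ 0 ^ 2 + Δ 1 ^ 2 + Δ 2 ^ 2) ↔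
        t' = p ∧ R' = R) := by
  have hfun : (fun h : E3 => ‖p + mv F h - (mv R' h + t')‖^2)
      = fun h : E3 => ‖(p - t') + mv (F - R') h‖^2 := by
    funext h
    rw [mv_sub]
    congr 1
    abel
  set κ : ℝ := 4 * Real.pi * ρ^5 / 15 with hκdef
  set V : ℝ := (volume (ball (0:E3) ρ)).toReal with hVdef
  set S : ℝ := ∑ i, ∑ j, ((F - R') i j)^2 with hSdef
  set σ : ℝ := Δ 0 ^ 2 + Δ 1 ^ 2 + Δ 2 ^ 2 with hσdef
  have hI : (∫ h in Metric.ball (0 : EuclideanSpace ℝ (Fin 3)) ρ,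
      ‖p + mv F h - (mv R' h + t')‖ ^ 2) = V * ‖p - t'‖^2 + κ * S := by
    rw [show (fun h : EuclideanSpace ℝ (Fin 3) => ‖p + mv F h - (mv R' h + t')‖ ^ 2)
        = fun h : E3 => ‖(p - t') + mv (F - R') h‖^2 from hfun]
    exact key (F - R') (p - t') ρ hρ
  -- matrix part
  set Q : Matrix (Fin 3) (Fin 3) ℝ := R'ᵀ * R with hQdef
  have hR'2 : R' * R'ᵀ = 1 := mul_eq_one_comm.mp hR'
  have hQ : Qᵀ * Q = 1 := by
    rw [hQdef, Matrix.transpose_mul, Matrix.transpose_transpose]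
    calc Rᵀ * R' * (R'ᵀ * R) = Rᵀ * (R' * R'ᵀ) * R := by simp only [Matrix.mul_assoc]
      _ = 1 := by rw [hR'2, Matrix.mul_one, hR]
  obtain ⟨htle, htQ⟩ := trace_QD hD Q hQ
  obtain ⟨-, htrD, htrDD⟩ := spectral_facts hD Q
  have hDt : Dᵀ = D := by
    rw [← Matrix.conjTranspose_eq_transpose_of_trivial]
    exact hD.1
  have hS : S = (D*D).trace - 2 * (Q * D).trace + 3 := by
    have hFt : Fᵀ = Dᵀ * Rᵀ := by rw [hFRD, Matrix.transpose_mul]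
    have e1 : Fᵀ * F = D * D := by
      rw [hFt, hFRD, hDt]
      calc D * Rᵀ * (R * D) = D * (Rᵀ * R) * D := by simp only [Matrix.mul_assoc]
        _ = D * D := by rw [hR, Matrix.mul_one]
    have e2 : (Fᵀ * R').trace = (Q * D).trace := by
      have : Fᵀ * R' = (R'ᵀ * F)ᵀ := by
        rw [Matrix.transpose_mul, Matrix.transpose_transpose]
      rw [this, Matrix.trace_transpose]
      congr 1
      rw [hFRD, hQdef, Matrix.mul_assoc]
    have e3 : (R'ᵀ * F).trace = (Q * D).trace := by
      congr 1
      rw [hFRD, hQdef, Matrix.mul_assoc]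
    have e4 : (R'ᵀ * R').trace = 3 := by
      rw [hR', Matrix.trace_one]
      simp
    have expand : (F - R')ᵀ * (F - R') = Fᵀ * F - Fᵀ * R' - R'ᵀ * F + R'ᵀ * R' := by
      rw [Matrix.transpose_sub, Matrix.sub_mul, Matrix.mul_sub, Matrix.mul_sub]
      abel
    rw [hSdef, sum_sq_eq_trace, expand, Matrix.trace_add, Matrix.trace_sub,
      Matrix.trace_sub, e1, e2, e3, e4]
    ring
  have hσ' : σ = (D*D).trace - 2 * D.trace + 3 := by
    have hev : ∀ i, Δ i ^ 2 = (hD.1.eigenvalues i)^2 - 2 * hD.1.eigenvalues i + 1 := by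
      intro i
      have := hΔ i
      nlinarith [this]
    rw [hσdef, htrDD, htrD,
      (Fin.sum_univ_three (fun i => Δ i ^ 2)).symm,
      Finset.sum_congr rfl (fun i _ => hev i), Finset.sum_add_distrib,
      Finset.sum_sub_distrib, ← Finset.mul_sum]
    simp
  have hSσ : S - σ = 2 * (D.trace - (Q * D).trace) := by rw [hS, hσ']; ring
  have hSge : σ ≤ S := by
    have := htle
    linarith [hSσ]
  have hV : 0 < V := by
    rw [hVdef]
    refine ENNReal.toReal_pos ?_ measure_ball_lt_top.ne
    exact (measure_ball_pos volume 0 hρ).ne'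
  have hκ : 0 < κ := by
    rw [hκdef]
    have := Real.pi_pos
    positivity
  have heqR : S = σ ↔ R' = R := by
    constructor
    · intro h
      have h0 : (Q * D).trace = D.trace := by linarith [hSσ.symm ▸ (by linarith : S - σ = 0)]
      have hQ1 : Q = 1 := htQ h0
      have : R' * (R'ᵀ * R) = R' := by rw [hQdef] at hQ1; rw [hQ1, Matrix.mul_one]
      calc R' = R' * R'ᵀ * R := by rw [Matrix.mul_assoc, this]
        _ = R := by rw [hR'2, Matrix.one_mul]
    · intro h
      have : Q = 1 := by rw [hQdef, h, hR]
      have h0 : (Q * D).trace = D.trace := by rw [this, Matrix.one_mul]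
      linarith [hSσ]
  constructor
  · rw [hI]
    have h1 : 0 ≤ V * ‖p - t'‖^2 := by positivity
    have h2 : κ * σ ≤ κ * S := by nlinarith
    linarith
  · rw [hI]
    constructor
    · intro h
      have h1 : 0 ≤ V * ‖p - t'‖^2 := by positivity
      have h2 : κ * σ ≤ κ * S := by nlinarith
      have h3 : V * ‖p - t'‖^2 = 0 := by linarith
      have h4 : κ * S = κ * σ := by linarith
      have hc : ‖p - t'‖^2 = 0 := by
        rcases mul_eq_zero.mp h3 with h | h
        · exact absurd h hV.ne'
        · exact h
      have ht : t' = p := by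
        have : p - t' = 0 := by
          have := pow_eq_zero_iff (n := 2) (by norm_num) |>.mp hc
          exact norm_eq_zero.mp this
        have := sub_eq_zero.mp this
        exact this.symm
      have hSeq : S = σ := by
        have := mul_left_cancel₀ hκ.ne' h4
        exact this
      exact ⟨ht, heqR.mp hSeq⟩
    · rintro ⟨h1, h2⟩
      have hSeq : S = σ := heqR.mpr h2
      rw [h1, hSeq]
      simp
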